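/- Let L be a finite, dually slim, lower semimodular lattice (dually slim: the set of meet-irreducible elements contains no three-element antichain). If a₁, a₂ ∈ L \ {0, 1} and (a₁, a₂) is both a complemented pair and a pseudocomplemented pair, then both a₁ and a₂ are meet-irreducible. -/

import Mathlib

open scoped Classical

/-- A subset `X` of a lattice with `⊥` is CD-independent if any two
incomparable members meet to `⊥`. -/
def CDIndep {L : Type*} [Lattice L] [OrderBot L] (X : Set L) : Prop :=
  ∀ x ∈ X, ∀ y ∈ X, ¬ x ≤ y → ¬ y ≤ x → x ⊓ y = ⊥

/-- `X` is a maximal CD-independent subset of `S` (within the ambient lattice). -/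
def MaxCDIndepIn {L : Type*} [Lattice L] [OrderBot L] (S X : Set L) : Prop :=
  X ⊆ S ∧ CDIndep X ∧ ∀ Y ⊆ S, CDIndep Y → X ⊆ Y → Y = X

/-- `X` is a maximal CD-independent subset of the whole lattice. -/
def MaxCDIndep {L : Type*} [Lattice L] [OrderBot L] (X : Set L) : Prop :=
  MaxCDIndepIn Set.univ X

/-- The length of the subposet `S`: the size of a longest chain contained in `S`, minus 1. -/
noncomputable def chainLen {L : Type*} [Lattice L] [Fintype L] (S : Set L) : ℕ :=
  ((Finset.univ.powerset.filter
      fun C : Finset L => ↑C ⊆ S ∧ IsChain (· ≤ ·) (C : Set L)).sup Finset.card) - 1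

/-- The length of the finite lattice `L`. -/
noncomputable def latLen (L : Type*) [Lattice L] [Fintype L] : ℕ :=
  chainLen (Set.univ : Set L)

/-- `u_*`: the meet of all lower covers of `u`. -/
noncomputable def lowstar {L : Type*} [Lattice L] [Fintype L] [BoundedOrder L] (u : L) : L :=
  (Finset.univ.filter fun v => v ⋖ u).inf id

/-- `L` is meet-distributive if every interval `[u_*, u]` (for `u ≠ ⊥`) is distributive. -/
def MeetDistrib (L : Type*) [Lattice L] [Fintype L] [BoundedOrder L] : Prop :=
  ∀ u : L, u ≠ ⊥ → ∀ x ∈ Set.Icc (lowstar u) u, ∀ y ∈ Set.Icc (lowstar u) u,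
    ∀ z ∈ Set.Icc (lowstar u) u, x ⊓ (y ⊔ z) = (x ⊓ y) ⊔ (x ⊓ z)

/-- Lower semimodularity: `a ⋖ a ⊔ b` implies `a ⊓ b ⋖ b`. -/
def LowerSemimodular (L : Type*) [Lattice L] : Prop :=
  ∀ a b : L, a ⋖ a ⊔ b → a ⊓ b ⋖ b

/-- The number of atoms of `L`. -/
noncomputable def atomsCard (L : Type*) [Lattice L] [OrderBot L] : ℕ :=
  {a : L | IsAtom a}.ncard

/-- `b` is the pseudocomplement of `a`: the largest element meeting `a` to `⊥`. -/
def PseudoCompl {L : Type*} [Lattice L] [OrderBot L] (a b : L) : Prop :=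
  a ⊓ b = ⊥ ∧ ∀ x, a ⊓ x = ⊥ → x ≤ b

/-- `(a, b)` is a pseudocomplemented pair: each is the pseudocomplement of the other. -/
def PseudoPair {L : Type*} [Lattice L] [OrderBot L] (a b : L) : Prop :=
  PseudoCompl a b ∧ PseudoCompl b a

/-- An element is meet-irreducible if it has exactly one cover. -/
def MeetIrred {L : Type*} [Lattice L] (a : L) : Prop :=
  ∃! b, a ⋖ b

/-- `L` is dually slim: no three-element antichain of meet-irreducible elements. -/
def DuallySlim (L : Type*) [Lattice L] : Prop :=
  ¬ ∃ x y z : L, MeetIrred x ∧ MeetIrred y ∧ MeetIrred z ∧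
    ¬ x ≤ y ∧ ¬ y ≤ x ∧ ¬ x ≤ z ∧ ¬ z ≤ x ∧ ¬ y ≤ z ∧ ¬ z ≤ y


section Helpers
variable {L : Type*} [Lattice L] [Fintype L]

/-- A maximal element above `d` not above `c` is meet-irreducible. -/
lemma exists_mir (c d : L) (h : ¬ c ≤ d) :
    ∃ m : L, (∃! b, m ⋖ b) ∧ d ≤ m ∧ ¬ c ≤ m := by
  obtain ⟨m, hm, hmax⟩ := Set.Finite.exists_maximalFor id {x : L | d ≤ x ∧ ¬ c ≤ x}
    (Set.toFinite _) ⟨d, le_rfl, h⟩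
  obtain ⟨hdm, hcm⟩ := hm
  have key : ∀ y, m < y → c ≤ y := by
    intro y hy
    by_contra hcy
    exact absurd (hmax ⟨hdm.trans hy.le, hcy⟩ hy.le) (not_le_of_gt hy)
  have hcov : m ⋖ m ⊔ c := by
    constructor
    · exact lt_of_le_of_ne le_sup_left (fun e => hcm (e ▸ le_sup_right))
    · intro z hz hz2
      exact absurd (sup_le hz.le (key z hz)) (not_le_of_gt hz2)
  refine ⟨m, ⟨m ⊔ c, hcov, ?_⟩, hdm, hcm⟩
  intro b hb
  have h1 : m ⊔ c ≤ b := sup_le hb.1.le (key b hb.1)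
  exact (h1.lt_or_eq.resolve_left (hb.2 hcov.1)).symm

lemma exists_covBy' (a : L) [OrderTop L] (ha : a ≠ ⊤) : ∃ c, a ⋖ c := by
  exact exists_covBy_of_wellFoundedLT (not_isMax_iff.mpr ⟨⊤, lt_top_iff_ne_top.mpr ha⟩)

end Helpers

lemma one_side {L : Type*} [Lattice L] [Fintype L] [BoundedOrder L]
    (hs : ¬ ∃ x y z : L, (∃! b, x ⋖ b) ∧ (∃! b, y ⋖ b) ∧ (∃! b, z ⋖ b) ∧
      ¬ x ≤ y ∧ ¬ y ≤ x ∧ ¬ x ≤ z ∧ ¬ z ≤ x ∧ ¬ y ≤ z ∧ ¬ z ≤ y)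
    (a₁ a₂ : L) (h1t : a₁ ≠ ⊤) (h2t : a₂ ≠ ⊤) (hsup : a₁ ⊔ a₂ = ⊤) :
    ∃! b, a₁ ⋖ b := by
  by_contra hni
  -- a₁ has two distinct covers
  obtain ⟨c₁, hc₁⟩ := exists_covBy' a₁ h1t
  have : ∃ c₂, a₁ ⋖ c₂ ∧ c₂ ≠ c₁ := by
    by_contra h
    push_neg at h
    exact hni ⟨c₁, hc₁, h⟩
  obtain ⟨c₂, hc₂, hne⟩ := this
  have h12 : ¬ c₁ ≤ c₂ := fun h => hne (h.lt_or_eq.resolve_left (hc₂.2 hc₁.1)).symm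
  have h21 : ¬ c₂ ≤ c₁ := fun h => hne (h.lt_or_eq.resolve_left (hc₁.2 hc₂.1))
  obtain ⟨m₁, hm₁i, hm₁ge, hm₁n⟩ := exists_mir c₁ c₂ h12
  obtain ⟨m₂, hm₂i, hm₂ge, hm₂n⟩ := exists_mir c₂ c₁ h21
  obtain ⟨n, hni', hnge, hnn⟩ := exists_mir ⊤ a₂ (fun h => h2t (top_le_iff.mp h))
  have ha₁m₁ : a₁ ≤ m₁ := hc₂.1.le.trans hm₁ge
  have ha₁m₂ : a₁ ≤ m₂ := hc₁.1.le.trans hm₂ge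
  have hm₁t : m₁ ≠ ⊤ := fun h => hm₁n (h ▸ le_top)
  have hm₂t : m₂ ≠ ⊤ := fun h => hm₂n (h ▸ le_top)
  have hnt : n ≠ ⊤ := fun h => hnn (h ▸ le_rfl)
  refine hs ⟨m₁, m₂, n, hm₁i, hm₂i, hni', ?_, ?_, ?_, ?_, ?_, ?_⟩
  · exact fun h => hm₂n (hm₁ge.trans h)
  · exact fun h => hm₁n (hm₂ge.trans h)
  · exact fun h => hnt (top_le_iff.mp (hsup ▸ sup_le ((ha₁m₁.trans h)) hnge))
  · exact fun h => hm₁t (top_le_iff.mp (hsup ▸ sup_le ha₁m₁ (hnge.trans h)))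
  · exact fun h => hnt (top_le_iff.mp (hsup ▸ sup_le ((ha₁m₂.trans h)) hnge))
  · exact fun h => hm₂t (top_le_iff.mp (hsup ▸ sup_le ha₁m₂ (hnge.trans h)))

theorem duallySlim_pseudocomplemented_pair_meetIrred {L : Type*} [Lattice L] [Fintype L]
    [BoundedOrder L] (hs : DuallySlim L) (hLSM : LowerSemimodular L)
    (a₁ a₂ : L) (h1b : a₁ ≠ ⊥) (h1t : a₁ ≠ ⊤) (h2b : a₂ ≠ ⊥) (h2t : a₂ ≠ ⊤)
    (hinf : a₁ ⊓ a₂ = ⊥) (hsup : a₁ ⊔ a₂ = ⊤) (hp : PseudoPair a₁ a₂) :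
    MeetIrred a₁ ∧ MeetIrred a₂ :=
  ⟨one_side hs a₁ a₂ h1t h2t hsup, one_side hs a₂ a₁ h2t h1t (by rw [sup_comm]; exact hsup)⟩
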